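/- Let s > 1, let n > 1 divide 2^s − 1, and let β ∈ 𝔽_{2^s} be a primitive n-th root of unity. Let I₁, I₂ ⊆ ℤ/nℤ be cyclotomic cosets (i.e., 2·Iⱼ = Iⱼ for j = 1, 2). Then (C(I₁), C(I₂)) is a CSS-T pair if and only if I₂ ⊆ I₁ and 0 ∉ I₁ + I₁ + I₂, where I₁ + I₁ + I₂ = {a + b + c : a, b ∈ I₁, c ∈ I₂} ⊆ ℤ/nℤ is the Minkowski sum. -/

import Mathlib

open Finset

/-- The Euclidean dual of a binary code. -/
def dualCode {n : ℕ} (C : Submodule (ZMod 2) (Fin n → ZMod 2)) :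
    Submodule (ZMod 2) (Fin n → ZMod 2) where
  carrier := {x | ∀ c ∈ C, ∑ i, x i * c i = 0}
  add_mem' := by
    intro a b ha hb
    intro c hc
    have : ∑ i, (a + b) i * c i = ∑ i, (a i * c i + b i * c i) := by
      apply Finset.sum_congr rfl
      intro i _
      simp [add_mul]
    rw [this, Finset.sum_add_distrib, ha c hc, hb c hc, add_zero]
  zero_mem' := by
    intro c hc
    simp
  smul_mem' := by
    intro r a ha
    intro c hc
    have : ∑ i, (r • a) i * c i = r * ∑ i, a i * c i := by
      rw [Finset.mul_sum]
      apply Finset.sum_congr rfl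
      intro i _
      simp [mul_assoc]
    rw [this, ha c hc, mul_zero]

/-- The (componentwise) Schur product of two binary codes. -/
def schur {n : ℕ} (C D : Submodule (ZMod 2) (Fin n → ZMod 2)) :
    Submodule (ZMod 2) (Fin n → ZMod 2) :=
  Submodule.span (ZMod 2) {x | ∃ c ∈ C, ∃ d ∈ D, x = c * d}

/-- A pair of binary codes `(C₁, C₂)` is a CSS-T pair if `C₂ ⊆ C₁ ∩ (C₁^{⋆2})^⊥`. -/
def IsCSST {n : ℕ} (C₁ C₂ : Submodule (ZMod 2) (Fin n → ZMod 2)) : Prop :=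
  C₂ ≤ C₁ ⊓ dualCode (schur C₁ C₁)

/-- The `ZMod 2`-linear evaluation map `c ↦ ∑ k, c k • β^(j·k)` used to cut out a
binary cyclic code by its parity checks. -/
noncomputable def evalMap {s n : ℕ} (β : GaloisField 2 s) (j : ZMod n) :
    (Fin n → ZMod 2) →ₗ[ZMod 2] GaloisField 2 s where
  toFun c := ∑ k : Fin n,
    algebraMap (ZMod 2) (GaloisField 2 s) (c k) * β ^ (j.val * (k : ℕ))
  map_add' := by
    intro a b
    rw [← Finset.sum_add_distrib]
    apply Finset.sum_congr rfl
    intro k _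
    simp [add_mul]
  map_smul' := by
    intro r a
    simp only [RingHom.id_apply]
    rw [Finset.smul_sum]
    apply Finset.sum_congr rfl
    intro k _
    simp [Algebra.smul_def, mul_assoc]

/-- The binary cyclic code with generating set `I ⊆ ℤ/nℤ`: the codewords are the
vectors `c` with `∑ k, c k β^(jk) = 0` for every `j ∉ I`. -/
noncomputable def cyclicCode {s n : ℕ} (β : GaloisField 2 s) (I : Set (ZMod n)) :
    Submodule (ZMod 2) (Fin n → ZMod 2) :=
  ⨅ j ∈ Iᶜ, LinearMap.ker (evalMap β j)


namespace CSST

variable {s n : ℕ}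

noncomputable def ee (β : GaloisField 2 s) (j : ZMod n) : GaloisField 2 s := β ^ j.val

lemma ee_nat [NeZero n] (β : GaloisField 2 s) (hβ : β ^ n = 1) (m : ℕ) :
    ee β ((m : ZMod n)) = β ^ m := by
  have h : ((m : ZMod n)).val = m % n := ZMod.val_natCast n m
  rw [ee, h]
  conv_rhs => rw [← Nat.div_add_mod m n]
  rw [pow_add, pow_mul, hβ, one_pow, one_mul]

lemma ee_add [NeZero n] (β : GaloisField 2 s) (hβ : β ^ n = 1) (i j : ZMod n) :
    ee β (i + j) = ee β i * ee β j := by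
  have h1 : i + j = ((i.val + j.val : ℕ) : ZMod n) := by
    push_cast
    rw [ZMod.natCast_val, ZMod.natCast_val, ZMod.cast_id, ZMod.cast_id]
  rw [h1, ee_nat β hβ, pow_add]; rfl

lemma ee_zero (β : GaloisField 2 s) : ee β (0 : ZMod n) = 1 := by
  simp [ee]

end CSST
namespace CSST
variable {s n : ℕ}

lemma nat_cast_n_eq_one (hodd : Odd n) : ((n : ℕ) : GaloisField 2 s) = 1 := by
  obtain ⟨k, hk⟩ := hodd
  have h2 : ((2 : ℕ) : GaloisField 2 s) = 0 := by
    exact_mod_cast CharP.cast_eq_zero (GaloisField 2 s) 2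
  subst hk
  push_cast
  rw [show ((2:ℕ):GaloisField 2 s) = 2 from by norm_num] at h2
  rw [h2]
  ring

lemma ortho_range (hn : 1 < n) (hodd : Odd n) (β : GaloisField 2 s)
    (hβ : IsPrimitiveRoot β n) (d : ZMod n) :
    ∑ i ∈ range n, ee β (d * ((i : ℕ) : ZMod n)) = if d = 0 then 1 else 0 := by
  haveI : NeZero n := ⟨by omega⟩
  have hb1 : β ^ n = 1 := hβ.pow_eq_one
  have hterm : ∀ i : ℕ, ee β (d * ((i:ℕ):ZMod n)) = (β ^ d.val) ^ i := by
    intro i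
    have : d * (i : ℕ) = ((d.val * i : ℕ) : ZMod n) := by
      push_cast
      rw [ZMod.natCast_val, ZMod.cast_id]
    rw [this, ee_nat β hb1, pow_mul]
  simp only [hterm]
  by_cases hd : d = 0
  · subst hd
    simp only [ZMod.val_zero, pow_zero, one_pow, sum_const, card_range, nsmul_eq_mul, mul_one]
    exact nat_cast_n_eq_one hodd
  · rw [if_neg hd]
    have hvpos : 0 < d.val := by
      rcases Nat.eq_zero_or_pos d.val with h | h
      · exact absurd (by rwa [← ZMod.val_eq_zero]) hd
      · exact h
    have hne1 : β ^ d.val ≠ 1 := hβ.pow_ne_one_of_pos_of_lt hvpos.ne' (ZMod.val_lt d)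
    rw [geom_sum_eq hne1, ← pow_mul]
    rw [mul_comm d.val n, pow_mul, hb1, one_pow, sub_self, zero_div]

lemma ortho_fin (hn : 1 < n) (hodd : Odd n) (β : GaloisField 2 s)
    (hβ : IsPrimitiveRoot β n) (d : ZMod n) :
    ∑ k : Fin n, ee β (d * ((k : ℕ) : ZMod n)) = if d = 0 then 1 else 0 := by
  rw [← ortho_range hn hodd β hβ d]
  exact Fin.sum_univ_eq_sum_range (fun i => ee β (d * ((i : ℕ) : ZMod n))) n

lemma ortho_zmod [NeZero n] (hn : 1 < n) (hodd : Odd n) (β : GaloisField 2 s)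
    (hβ : IsPrimitiveRoot β n) (d : ZMod n) :
    ∑ p : ZMod n, ee β (p * d) = if d = 0 then 1 else 0 := by
  haveI : NeZero n := ⟨by omega⟩
  rw [← ortho_range hn hodd β hβ d]
  apply Finset.sum_bij' (fun (p : ZMod n) (_ : p ∈ univ) => p.val)
      (fun (i : ℕ) (_ : i ∈ range n) => ((i : ZMod n)))
  · intro p _; exact Finset.mem_range.mpr (ZMod.val_lt p)
  · intro i _; exact Finset.mem_univ _
  · intro p _; exact ZMod.natCast_rightInverse p
  · intro i hi; exact ZMod.val_cast_of_lt (Finset.mem_range.mp hi)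
  · intro p _
    rw [mul_comm d]
    congr 1
    rw [ZMod.natCast_val, ZMod.cast_id]

end CSST
namespace CSST
variable {s n : ℕ}

lemma evalMap_eq [NeZero n] (β : GaloisField 2 s) (hb1 : β ^ n = 1)
    (j : ZMod n) (x : Fin n → ZMod 2) :
    evalMap β j x = ∑ k : Fin n,
      algebraMap (ZMod 2) (GaloisField 2 s) (x k) * ee β (j * ((k : ℕ) : ZMod n)) := by
  show (∑ k : Fin n, algebraMap (ZMod 2) (GaloisField 2 s) (x k) * β ^ (j.val * (k:ℕ))) = _
  refine Finset.sum_congr rfl (fun k _ => ?_)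
  congr 1
  have : j * ((k : ℕ) : ZMod n) = ((j.val * (k:ℕ) : ℕ) : ZMod n) := by
    push_cast
    rw [ZMod.natCast_val, ZMod.cast_id]
  rw [this, ee_nat β hb1]

lemma inv_formula [NeZero n] (hn : 1 < n) (hodd : Odd n) (β : GaloisField 2 s)
    (hβ : IsPrimitiveRoot β n) (x : Fin n → ZMod 2) (m : Fin n) :
    ∑ p : ZMod n, evalMap β p x * ee β (-(p * ((m : ℕ) : ZMod n)))
      = algebraMap (ZMod 2) (GaloisField 2 s) (x m) := by
  have hb1 : β ^ n = 1 := hβ.pow_eq_one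
  have step1 : ∀ p : ZMod n, evalMap β p x * ee β (-(p * ((m : ℕ) : ZMod n)))
      = ∑ k : Fin n, algebraMap (ZMod 2) (GaloisField 2 s) (x k)
          * ee β (p * (((k : ℕ) : ZMod n) - ((m : ℕ) : ZMod n))) := by
    intro p
    rw [evalMap_eq β hb1, Finset.sum_mul]
    refine Finset.sum_congr rfl (fun k _ => ?_)
    rw [mul_assoc, ← ee_add β hb1]
    congr 2
    ring
  simp only [step1]
  rw [Finset.sum_comm]
  have step2 : ∀ k : Fin n,
      ∑ p : ZMod n, algebraMap (ZMod 2) (GaloisField 2 s) (x k)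
          * ee β (p * (((k : ℕ) : ZMod n) - ((m : ℕ) : ZMod n)))
      = algebraMap (ZMod 2) (GaloisField 2 s) (x k)
          * (if ((k : ℕ) : ZMod n) - ((m : ℕ) : ZMod n) = 0 then 1 else 0) := by
    intro k
    rw [← Finset.mul_sum, ortho_zmod hn hodd β hβ]
  simp only [step2]
  have hinj : ∀ k : Fin n, (((k : ℕ) : ZMod n) - ((m : ℕ) : ZMod n) = 0) ↔ k = m := by
    intro k
    rw [sub_eq_zero]
    constructor
    · intro h
      have := congrArg ZMod.val h
      rw [ZMod.val_cast_of_lt k.isLt, ZMod.val_cast_of_lt m.isLt] at this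
      exact Fin.ext this
    · intro h; rw [h]
  simp only [hinj]
  simp only [mul_ite, mul_one, mul_zero]
  rw [Finset.sum_ite_eq' univ m]
  simp
  
end CSST
namespace CSST
variable {s n : ℕ}

lemma two_mul_bijective [NeZero n] (hu : IsUnit (2 : ZMod n)) :
    Function.Bijective (fun x : ZMod n => 2 * x) := by
  obtain ⟨u, hu⟩ := hu
  constructor
  · intro x y h
    simp only at h
    have := congrArg (fun z => (↑u⁻¹ : ZMod n) * z) h
    simp only [← mul_assoc, ← hu, Units.inv_mul, one_mul] at this
    exact this
  · intro y
    refine ⟨(↑u⁻¹ : ZMod n) * y, ?_⟩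
    simp only [← mul_assoc, ← hu, Units.mul_inv, one_mul]

noncomputable def invDFT [NeZero n] (β : GaloisField 2 s) (A : ZMod n → GaloisField 2 s) (k : Fin n) :
    GaloisField 2 s :=
  ∑ p : ZMod n, A p * ee β (-(p * ((k : ℕ) : ZMod n)))

lemma invDFT_sq [NeZero n] (β : GaloisField 2 s) (hb1 : β ^ n = 1)
    (hu : IsUnit (2 : ZMod n)) (A : ZMod n → GaloisField 2 s)
    (hA : ∀ j, A (2 * j) = A j ^ 2) (k : Fin n) :
    invDFT β A k ^ 2 = invDFT β A k := by
  haveI : Fact (Nat.Prime 2) := ⟨Nat.prime_two⟩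
  rw [invDFT, sum_pow_char]
  have hterm : ∀ p : ZMod n, (A p * ee β (-(p * ((k : ℕ) : ZMod n)))) ^ 2
      = A (2 * p) * ee β (-((2 * p) * ((k : ℕ) : ZMod n))) := by
    intro p
    rw [mul_pow, hA p, sq (ee β _), ← ee_add β hb1]
    congr 2
    ring
  simp only [hterm]
  exact (Function.Bijective.sum_comp (two_mul_bijective hu)
    (fun q => A q * ee β (-(q * ((k : ℕ) : ZMod n)))))

open scoped Classical in
noncomputable def binWord [NeZero n] (β : GaloisField 2 s) (A : ZMod n → GaloisField 2 s) :
    Fin n → ZMod 2 :=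
  fun k => if invDFT β A k = 0 then 0 else 1

lemma binWord_lift [NeZero n] (β : GaloisField 2 s) (hb1 : β ^ n = 1)
    (hu : IsUnit (2 : ZMod n)) (A : ZMod n → GaloisField 2 s)
    (hA : ∀ j, A (2 * j) = A j ^ 2) (k : Fin n) :
    algebraMap (ZMod 2) (GaloisField 2 s) (binWord β A k) = invDFT β A k := by
  have h := invDFT_sq β hb1 hu A hA k
  by_cases h0 : invDFT β A k = 0
  · simp [binWord, h0]
  · have h1 : invDFT β A k = 1 := by
      have h2 : invDFT β A k * (invDFT β A k - 1) = 0 := by linear_combination h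
      rcases mul_eq_zero.mp h2 with h' | h'
      · exact absurd h' h0
      · exact sub_eq_zero.mp h'
    simp [binWord, h0, h1]

lemma binWord_spec [NeZero n] (hn : 1 < n) (hodd : Odd n) (β : GaloisField 2 s)
    (hβ : IsPrimitiveRoot β n) (hu : IsUnit (2 : ZMod n))
    (A : ZMod n → GaloisField 2 s) (hA : ∀ j, A (2 * j) = A j ^ 2) (j : ZMod n) :
    evalMap β j (binWord β A) = A j := by
  have hb1 : β ^ n = 1 := hβ.pow_eq_one
  rw [evalMap_eq β hb1]
  have hterm : ∀ k : Fin n,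
      algebraMap (ZMod 2) (GaloisField 2 s) (binWord β A k) * ee β (j * ((k : ℕ) : ZMod n))
      = ∑ p : ZMod n, A p * ee β ((j - p) * ((k : ℕ) : ZMod n)) := by
    intro k
    rw [binWord_lift β hb1 hu A hA k, invDFT, Finset.sum_mul]
    refine Finset.sum_congr rfl (fun p _ => ?_)
    rw [mul_assoc, ← ee_add β hb1]
    congr 2
    ring
  simp only [hterm]
  rw [Finset.sum_comm]
  have hterm2 : ∀ p : ZMod n,
      ∑ k : Fin n, A p * ee β ((j - p) * ((k : ℕ) : ZMod n))
      = A p * (if j - p = 0 then 1 else 0) := by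
    intro p
    rw [← Finset.mul_sum, ortho_fin hn hodd β hβ]
  simp only [hterm2]
  have hcond : ∀ p : ZMod n, (j - p = 0) ↔ (p = j) := by
    intro p; rw [sub_eq_zero, eq_comm]
  simp only [hcond, mul_ite, mul_one, mul_zero]
  rw [Finset.sum_ite_eq' univ j]
  simp

end CSST
namespace CSST
variable {s n : ℕ}

lemma triple_formula [NeZero n] (hn : 1 < n) (hodd : Odd n) (β : GaloisField 2 s)
    (hβ : IsPrimitiveRoot β n) (x y z : Fin n → ZMod 2) :
    ∑ p : ZMod n, ∑ q : ZMod n,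
        evalMap β p x * evalMap β q y * evalMap β (-(p + q)) z
      = algebraMap (ZMod 2) (GaloisField 2 s) (∑ k, x k * y k * z k) := by
  have hb1 : β ^ n = 1 := hβ.pow_eq_one
  calc
    ∑ p : ZMod n, ∑ q : ZMod n,
        evalMap β p x * evalMap β q y * evalMap β (-(p + q)) z
      = ∑ p : ZMod n, ∑ q : ZMod n, ∑ m : Fin n,
          (evalMap β p x * ee β (-(p * ((m:ℕ) : ZMod n)))) *
          ((evalMap β q y * ee β (-(q * ((m:ℕ) : ZMod n)))) *
            algebraMap (ZMod 2) (GaloisField 2 s) (z m)) := by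
        refine Finset.sum_congr rfl fun p _ => Finset.sum_congr rfl fun q _ => ?_
        rw [evalMap_eq β hb1 (-(p+q)) z, Finset.mul_sum]
        refine Finset.sum_congr rfl fun m _ => ?_
        have hee : ee β ((-(p+q)) * ((m:ℕ) : ZMod n))
            = ee β (-(p * ((m:ℕ) : ZMod n))) * ee β (-(q * ((m:ℕ) : ZMod n))) := by
          rw [← ee_add β hb1]; congr 1; ring
        rw [hee]; ring
    _ = ∑ m : Fin n, ∑ p : ZMod n, ∑ q : ZMod n,
          (evalMap β p x * ee β (-(p * ((m:ℕ) : ZMod n)))) *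
          ((evalMap β q y * ee β (-(q * ((m:ℕ) : ZMod n)))) *
            algebraMap (ZMod 2) (GaloisField 2 s) (z m)) := by
        exact (Finset.sum_congr rfl fun p _ => Finset.sum_comm).trans Finset.sum_comm
    _ = ∑ m : Fin n,
          (∑ p : ZMod n, evalMap β p x * ee β (-(p * ((m:ℕ) : ZMod n)))) *
          ((∑ q : ZMod n, evalMap β q y * ee β (-(q * ((m:ℕ) : ZMod n)))) *
            algebraMap (ZMod 2) (GaloisField 2 s) (z m)) := by
        refine Finset.sum_congr rfl fun m _ => ?_
        simp only [Finset.sum_mul, Finset.mul_sum]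
        refine (Finset.sum_congr rfl fun p _ => Finset.sum_congr rfl fun q _ => ?_).trans
          Finset.sum_comm
        ring
    _ = ∑ m : Fin n,
          algebraMap (ZMod 2) (GaloisField 2 s) (x m) *
          (algebraMap (ZMod 2) (GaloisField 2 s) (y m) *
            algebraMap (ZMod 2) (GaloisField 2 s) (z m)) := by
        refine Finset.sum_congr rfl fun m _ => ?_
        rw [inv_formula hn hodd β hβ x m, inv_formula hn hodd β hβ y m]
    _ = algebraMap (ZMod 2) (GaloisField 2 s) (∑ k, x k * y k * z k) := by
        rw [map_sum]
        refine Finset.sum_congr rfl fun m _ => ?_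
        rw [map_mul, map_mul, mul_assoc]

end CSST
namespace CSST
variable {s n : ℕ}

lemma frob_ne (hs : 1 < s) {u v : ℕ} (hu : u < v) (hv : v < s)
    (h : ∀ t : GaloisField 2 s, t ^ (2 ^ u) = t ^ (2 ^ v)) : False := by
  haveI : Fact (Nat.Prime 2) := ⟨Nat.prime_two⟩
  haveI : Fintype (GaloisField 2 s) := Fintype.ofFinite _
  have hcard : Fintype.card (GaloisField 2 s) = 2 ^ s := by
    rw [← Nat.card_eq_fintype_card]
    exact GaloisField.card 2 s (by omega)
  set P : Polynomial (GaloisField 2 s) :=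
    Polynomial.X ^ (2 ^ v) - Polynomial.X ^ (2 ^ u) with hP
  have hlt : 2 ^ u < 2 ^ v := Nat.pow_lt_pow_right one_lt_two hu
  have hPne : P ≠ 0 := by
    intro h0
    have hcc := congrArg (fun Q => Polynomial.coeff Q (2 ^ v)) h0
    have hne : ¬((2:ℕ) ^ v = 2 ^ u) := by omega
    simp [hP, Polynomial.coeff_sub, Polynomial.coeff_X_pow, hne] at hcc
  have hdeg : P.natDegree < Fintype.card (GaloisField 2 s) := by
    rw [hcard]
    have : P.natDegree ≤ 2 ^ v := by
      apply le_trans (Polynomial.natDegree_sub_le _ _)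
      simp [Polynomial.natDegree_X_pow, le_of_lt hlt]
    have h2 : (2:ℕ) ^ v < 2 ^ s := Nat.pow_lt_pow_right one_lt_two hv
    omega
  apply hPne
  apply Polynomial.eq_zero_of_natDegree_lt_card_of_eval_eq_zero' P Finset.univ
  · intro t _
    simp [hP, (h t).symm]
  · rwa [Finset.card_univ]

lemma indep [NeZero s] (hs : 1 < s) (c : ZMod s → GaloisField 2 s)
    (h : ∀ t : GaloisField 2 s, ∑ m : ZMod s, c m * t ^ ((2:ℕ) ^ (m.val)) = 0) :
    ∀ m, c m = 0 := by
  set Φ : ZMod s → (GaloisField 2 s →* GaloisField 2 s) :=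
    fun m => powMonoidHom (2 ^ m.val) with hΦ
  have hΦinj : Function.Injective Φ := by
    intro m m' hmm
    by_contra hne
    have hvne : m.val ≠ m'.val := fun hv => hne (ZMod.val_injective _ hv)
    have hall : ∀ t : GaloisField 2 s, t ^ (2 ^ m.val) = t ^ (2 ^ m'.val) := by
      intro t
      exact congrArg (fun f => (f : GaloisField 2 s →* GaloisField 2 s) t) hmm
    rcases Nat.lt_or_ge m.val m'.val with hlt | hge
    · exact frob_ne hs hlt (ZMod.val_lt m') hall
    · have hlt : m'.val < m.val := by omega
      exact frob_ne hs hlt (ZMod.val_lt m) (fun t => (hall t).symm)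
  have hli : LinearIndependent (GaloisField 2 s)
      (fun m : ZMod s => ((Φ m : GaloisField 2 s →* GaloisField 2 s) :
        GaloisField 2 s → GaloisField 2 s)) :=
    (linearIndependent_monoidHom (GaloisField 2 s) (GaloisField 2 s)).comp Φ hΦinj
  have := Fintype.linearIndependent_iff.mp hli c ?_
  · exact this
  · funext t
    have := h t
    simpa [Φ, powMonoidHom, smul_eq_mul] using h t

end CSST
namespace CSST
variable {s n : ℕ}

lemma n_odd (hs : 1 < s) (hn : 1 < n) (hdvd : n ∣ 2 ^ s - 1) : Odd n := by
  rcases Nat.even_or_odd n with he | ho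
  · exfalso
    have h1 : (2:ℕ) ∣ n := he.two_dvd
    have h2 : (2:ℕ) ∣ 2 ^ s - 1 := h1.trans hdvd
    have h3 : (2:ℕ) ^ s ≥ 2 := by
      calc (2:ℕ) ≤ 2 ^ 1 := by norm_num
      _ ≤ 2 ^ s := Nat.pow_le_pow_right (by norm_num) (by omega)
    have h4 : (2:ℕ) ∣ 2 ^ s := dvd_pow_self 2 (by omega)
    have h5 : 2 ^ s - (2 ^ s - 1) = 1 := by
      have : (1:ℕ) ≤ 2 ^ s := Nat.one_le_two_pow
      omega
    have h6 := Nat.dvd_sub h4 h2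
    rw [h5] at h6
    omega
  · exact ho

lemma two_unit (hs : 1 < s) (hn : 1 < n) (hdvd : n ∣ 2 ^ s - 1) :
    IsUnit (2 : ZMod n) := by
  have hodd := n_odd hs hn hdvd
  have : ¬ (2:ℕ) ∣ n := by
    intro h
    exact (Nat.not_even_iff_odd.mpr hodd) (even_iff_two_dvd.mpr h)
  have := ZMod.isUnit_prime_of_not_dvd Nat.prime_two this
  exact_mod_cast this

lemma two_pow_s_eq_one (hs : 1 < s) (hn : 1 < n) (hdvd : n ∣ 2 ^ s - 1) :
    (2 : ZMod n) ^ s = 1 := by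
  have h2 : ((2^s - 1 : ℕ) : ZMod n) = 0 :=
    (ZMod.natCast_eq_zero_iff _ _).mpr hdvd
  have h3 : (2:ℕ)^s = (2^s - 1) + 1 := by
    have : (1:ℕ) ≤ 2^s := Nat.one_le_two_pow
    omega
  calc (2 : ZMod n)^s = (((2:ℕ)^s : ℕ) : ZMod n) := by push_cast; ring
  _ = (((2^s - 1) + 1 : ℕ) : ZMod n) := by rw [← h3]
  _ = 1 := by push_cast; rw [h2]; ring

end CSST
namespace CSST
variable {s n : ℕ}

lemma mem_cyclicCode (β : GaloisField 2 s) (I : Set (ZMod n)) (x : Fin n → ZMod 2) :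
    x ∈ cyclicCode β I ↔ ∀ j, j ∉ I → evalMap β j x = 0 := by
  simp [cyclicCode, Submodule.mem_iInf, LinearMap.mem_ker, Set.mem_compl_iff]

open scoped Classical in
noncomputable def spec [NeZero n] [NeZero s] (a : ZMod n) (t : GaloisField 2 s) :
    ZMod n → GaloisField 2 s :=
  fun j => ∑ m : ZMod s, if (2 : ZMod n) ^ m.val * a = j then t ^ ((2:ℕ) ^ m.val) else 0

lemma spec_support [NeZero n] [NeZero s] (a : ZMod n) (t : GaloisField 2 s) (j : ZMod n)
    (h : spec a t j ≠ 0) : ∃ m : ZMod s, (2 : ZMod n) ^ m.val * a = j := by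
  by_contra hc
  push_neg at hc
  exact h (Finset.sum_eq_zero fun m _ => if_neg (hc m))

lemma orbit_mem {I : Set (ZMod n)} (hI : (fun x => 2 * x) '' I = I) {a : ZMod n}
    (ha : a ∈ I) (m : ℕ) : (2 : ZMod n) ^ m * a ∈ I := by
  induction m with
  | zero => simpa using ha
  | succ k ih =>
      have : (2 : ZMod n) ^ (k + 1) * a = 2 * ((2:ZMod n) ^ k * a) := by ring
      rw [this, ← hI]
      exact Set.mem_image_of_mem _ ih

lemma spec_conj [NeZero n] [NeZero s] (hs : 1 < s) (hn : 1 < n) (hdvd : n ∣ 2 ^ s - 1)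
    (a : ZMod n) (t : GaloisField 2 s) (j : ZMod n) :
    spec a t (2 * j) = (spec a t j) ^ 2 := by
  haveI : Fact (Nat.Prime 2) := ⟨Nat.prime_two⟩
  haveI : Fact (1 < s) := ⟨hs⟩
  haveI : Fintype (GaloisField 2 s) := Fintype.ofFinite _
  have h2s := two_pow_s_eq_one hs hn hdvd
  have hinj : Function.Injective (fun x : ZMod n => 2 * x) :=
    (two_mul_bijective (two_unit hs hn hdvd)).1
  have hts : t ^ ((2:ℕ) ^ s) = t := by
    have hcard : Fintype.card (GaloisField 2 s) = 2 ^ s := by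
      rw [← Nat.card_eq_fintype_card]; exact GaloisField.card 2 s (by omega)
    rw [← hcard]; exact FiniteField.pow_card t
  have key : ∀ m : ZMod s,
      (if (2 : ZMod n) ^ ((m + 1 : ZMod s)).val * a = 2 * j
        then t ^ ((2:ℕ) ^ ((m + 1 : ZMod s)).val) else 0)
      = (if (2 : ZMod n) ^ m.val * a = j then (t ^ ((2:ℕ) ^ m.val)) ^ 2 else 0) := by
    intro m
    have hv : m.val < s := ZMod.val_lt m
    have hval : ((m + 1 : ZMod s)).val = (m.val + 1) % s := by
      rw [ZMod.val_add, ZMod.val_one]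
    by_cases hcase : m.val + 1 < s
    · rw [hval, Nat.mod_eq_of_lt hcase]
      refine if_congr ?_ ?_ rfl
      · constructor
        · intro h
          apply hinj
          simpa [pow_succ, mul_comm, mul_assoc, mul_left_comm] using h
        · intro h
          rw [pow_succ, mul_comm ((2:ZMod n) ^ m.val) 2, mul_assoc, h]
      · rw [← pow_mul, pow_succ]
    · have hveq : m.val + 1 = s := by omega
      rw [hval, hveq, Nat.mod_self]
      refine if_congr ?_ ?_ rfl
      · simp only [pow_zero, one_mul]
        constructor
        · intro h
          apply hinj
          show 2 * ((2:ZMod n) ^ m.val * a) = 2 * j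
          have heq : (2:ZMod n) * ((2:ZMod n) ^ m.val * a) = (2:ZMod n) ^ (m.val + 1) * a := by
            ring
          rw [heq, hveq, h2s, one_mul, h]
        · intro h
          rw [← h]
          have heq : (2:ZMod n) * ((2:ZMod n) ^ m.val * a) = (2:ZMod n) ^ (m.val + 1) * a := by
            ring
          rw [heq, hveq, h2s, one_mul]
      · rw [pow_zero, pow_one, ← pow_mul, ← pow_succ, hveq, hts]
  calc spec a t (2 * j)
      = ∑ m : ZMod s, (if (2 : ZMod n) ^ ((m + 1 : ZMod s)).val * a = 2 * j
          then t ^ ((2:ℕ) ^ ((m + 1 : ZMod s)).val) else 0) := by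
        rw [spec]
        exact (Fintype.sum_equiv (Equiv.addRight (1 : ZMod s))
          (fun m => if (2 : ZMod n) ^ ((m + 1 : ZMod s)).val * a = 2 * j
            then t ^ ((2:ℕ) ^ ((m + 1 : ZMod s)).val) else 0)
          (fun m => if (2 : ZMod n) ^ m.val * a = 2 * j
            then t ^ ((2:ℕ) ^ m.val) else 0)
          (fun m => rfl)).symm
    _ = ∑ m : ZMod s, (if (2 : ZMod n) ^ m.val * a = j
          then (t ^ ((2:ℕ) ^ m.val)) ^ 2 else 0) := Finset.sum_congr rfl fun m _ => key m
    _ = (spec a t j) ^ 2 := by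
        rw [spec, sum_pow_char]
        refine Finset.sum_congr rfl fun m _ => ?_
        rw [apply_ite (· ^ 2)]
        norm_num

lemma spec_word_mem [NeZero n] [NeZero s] (hs : 1 < s) (hn : 1 < n) (hdvd : n ∣ 2 ^ s - 1)
    (β : GaloisField 2 s) (hβ : IsPrimitiveRoot β n)
    {I : Set (ZMod n)} (hI : (fun x => 2 * x) '' I = I) {a : ZMod n} (ha : a ∈ I)
    (t : GaloisField 2 s) :
    binWord β (spec a t) ∈ cyclicCode β I := by
  rw [mem_cyclicCode]
  intro j hj
  rw [binWord_spec hn (n_odd hs hn hdvd) β hβ (two_unit hs hn hdvd) _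
    (spec_conj hs hn hdvd a t)]
  by_contra h0
  obtain ⟨m, hm⟩ := spec_support a t j h0
  exact hj (hm ▸ orbit_mem hI ha m.val)

end CSST
namespace CSST
variable {s n : ℕ}

lemma collapse [NeZero n] [NeZero s] (a : ZMod n) (t : GaloisField 2 s)
    (g : ZMod n → GaloisField 2 s) :
    ∑ p : ZMod n, spec a t p * g p
      = ∑ m : ZMod s, t ^ ((2:ℕ) ^ m.val) * g ((2 : ZMod n) ^ m.val * a) := by
  classical
  calc ∑ p : ZMod n, spec a t p * g p
      = ∑ p : ZMod n, ∑ m : ZMod s,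
          (if (2 : ZMod n) ^ m.val * a = p then t ^ ((2:ℕ) ^ m.val) * g p else 0) := by
        refine Finset.sum_congr rfl fun p _ => ?_
        rw [spec, Finset.sum_mul]
        exact Finset.sum_congr rfl fun m _ => by rw [ite_mul, zero_mul]
    _ = ∑ m : ZMod s, ∑ p : ZMod n,
          (if (2 : ZMod n) ^ m.val * a = p then t ^ ((2:ℕ) ^ m.val) * g p else 0) :=
        Finset.sum_comm
    _ = ∑ m : ZMod s, t ^ ((2:ℕ) ^ m.val) * g ((2 : ZMod n) ^ m.val * a) := by
        refine Finset.sum_congr rfl fun m _ => ?_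
        rw [Finset.sum_ite_eq univ ((2 : ZMod n) ^ m.val * a)
          (fun p => t ^ ((2:ℕ) ^ m.val) * g p)]
        simp

lemma spec_triple_sum [NeZero n] [NeZero s] (a b c : ZMod n)
    (t u v : GaloisField 2 s) :
    ∑ p : ZMod n, ∑ q : ZMod n, spec a t p * spec b u q * spec c v (-(p + q))
      = ∑ m1 : ZMod s, ∑ m2 : ZMod s, ∑ m3 : ZMod s,
          (if (2:ZMod n) ^ m1.val * a + (2:ZMod n) ^ m2.val * b + (2:ZMod n) ^ m3.val * c = 0
            then t ^ ((2:ℕ) ^ m1.val) * u ^ ((2:ℕ) ^ m2.val) * v ^ ((2:ℕ) ^ m3.val)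
            else 0) := by
  classical
  have hcond : ∀ (A B C : ZMod n), (C = -(A + B)) ↔ (A + B + C = 0) := by
    intro A B C
    constructor
    · intro h; rw [h]; ring
    · intro h; linear_combination h
  calc ∑ p : ZMod n, ∑ q : ZMod n, spec a t p * spec b u q * spec c v (-(p + q))
      = ∑ p : ZMod n, spec a t p * (∑ q : ZMod n, spec b u q * spec c v (-(p + q))) := by
        refine Finset.sum_congr rfl fun p _ => ?_
        rw [Finset.mul_sum]
        exact Finset.sum_congr rfl fun q _ => by ring
    _ = ∑ m1 : ZMod s, t ^ ((2:ℕ) ^ m1.val) *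
          (∑ q : ZMod n, spec b u q * spec c v (-((2:ZMod n) ^ m1.val * a + q))) :=
        collapse a t _
    _ = ∑ m1 : ZMod s, t ^ ((2:ℕ) ^ m1.val) *
          (∑ m2 : ZMod s, u ^ ((2:ℕ) ^ m2.val) *
            spec c v (-((2:ZMod n) ^ m1.val * a + (2:ZMod n) ^ m2.val * b))) := by
        refine Finset.sum_congr rfl fun m1 _ => ?_
        rw [collapse b u (fun q => spec c v (-((2:ZMod n) ^ m1.val * a + q)))]
    _ = ∑ m1 : ZMod s, ∑ m2 : ZMod s, ∑ m3 : ZMod s,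
          (if (2:ZMod n) ^ m1.val * a + (2:ZMod n) ^ m2.val * b + (2:ZMod n) ^ m3.val * c = 0
            then t ^ ((2:ℕ) ^ m1.val) * u ^ ((2:ℕ) ^ m2.val) * v ^ ((2:ℕ) ^ m3.val)
            else 0) := by
        refine Finset.sum_congr rfl fun m1 _ => ?_
        rw [Finset.mul_sum]
        refine Finset.sum_congr rfl fun m2 _ => ?_
        rw [spec, Finset.mul_sum, Finset.mul_sum]
        refine Finset.sum_congr rfl fun m3 _ => ?_
        rw [if_congr (hcond ((2:ZMod n) ^ m1.val * a) ((2:ZMod n) ^ m2.val * b)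
          ((2:ZMod n) ^ m3.val * c)) rfl rfl]
        split
        · ring
        · ring

end CSST
namespace CSST
variable {s n : ℕ}

lemma mem_dualCode {x : Fin n → ZMod 2} {C : Submodule (ZMod 2) (Fin n → ZMod 2)} :
    x ∈ dualCode C ↔ ∀ c ∈ C, ∑ i, x i * c i = 0 := Iff.rfl

lemma backward [NeZero n] [NeZero s] (hs : 1 < s) (hn : 1 < n) (hdvd : n ∣ 2 ^ s - 1)
    (β : GaloisField 2 s) (hβ : IsPrimitiveRoot β n)
    (I₁ I₂ : Set (ZMod n))
    (hsub : I₂ ⊆ I₁)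
    (hnt : ¬ ∃ a ∈ I₁, ∃ b ∈ I₁, ∃ c ∈ I₂, a + b + c = (0 : ZMod n)) :
    IsCSST (cyclicCode β I₁) (cyclicCode β I₂) := by
  have hodd := n_odd hs hn hdvd
  have hem : Function.Injective (algebraMap (ZMod 2) (GaloisField 2 s)) :=
    (algebraMap (ZMod 2) (GaloisField 2 s)).injective
  refine le_inf ?_ ?_
  · intro x hx
    rw [mem_cyclicCode] at hx ⊢
    intro j hj
    exact hx j (fun hj2 => hj (hsub hj2))
  · intro z hz
    rw [mem_dualCode]
    intro w hw
    induction hw using Submodule.span_induction with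
    | mem w hwmem =>
        obtain ⟨x, hx, y, hy, rfl⟩ := hwmem
        apply hem
        rw [map_zero]
        have hre : ∑ i, z i * (x * y) i = ∑ k, x k * y k * z k := by
          refine Finset.sum_congr rfl fun i _ => ?_
          simp [Pi.mul_apply]
          ring
        rw [hre, ← triple_formula hn hodd β hβ x y z]
        apply Finset.sum_eq_zero
        intro p _
        apply Finset.sum_eq_zero
        intro q _
        by_cases hp : p ∈ I₁
        · by_cases hq : q ∈ I₁
          · by_cases hr : -(p + q) ∈ I₂
            · exact absurd ⟨p, hp, q, hq, -(p+q), hr, by ring⟩ hnt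
            · rw [(mem_cyclicCode β I₂ z).mp hz _ hr, mul_zero]
          · rw [(mem_cyclicCode β I₁ y).mp hy _ hq, mul_zero, zero_mul]
        · rw [(mem_cyclicCode β I₁ x).mp hx _ hp, zero_mul, zero_mul]
    | zero => simp
    | add w w' hwm hwm' ihw ihw' =>
        have : ∑ i, z i * (w + w') i = (∑ i, z i * w i) + ∑ i, z i * w' i := by
          rw [← Finset.sum_add_distrib]
          exact Finset.sum_congr rfl fun i _ => by simp [mul_add]
        rw [this, ihw, ihw', add_zero]
    | smul r w hwm ihw =>
        have : ∑ i, z i * (r • w) i = r * ∑ i, z i * w i := by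
          rw [Finset.mul_sum]
          exact Finset.sum_congr rfl fun i _ => by simp [smul_eq_mul]; ring
        rw [this, ihw, mul_zero]

end CSST
namespace CSST
variable {s n : ℕ}

lemma forward_sub [NeZero n] [NeZero s] (hs : 1 < s) (hn : 1 < n) (hdvd : n ∣ 2 ^ s - 1)
    (β : GaloisField 2 s) (hβ : IsPrimitiveRoot β n)
    (I₁ I₂ : Set (ZMod n)) (hI₂ : (fun a => 2 * a) '' I₂ = I₂)
    (h : IsCSST (cyclicCode β I₁) (cyclicCode β I₂)) :
    I₂ ⊆ I₁ := by
  classical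
  have hodd := n_odd hs hn hdvd
  have hu := two_unit hs hn hdvd
  have hC21 : cyclicCode β I₂ ≤ cyclicCode β I₁ := le_trans h inf_le_left
  intro b hb
  by_contra hbI1
  have hzero : ∀ t : GaloisField 2 s, spec b t b = 0 := by
    intro t
    have hmem := hC21 (spec_word_mem hs hn hdvd β hβ hI₂ hb t)
    have h0 := (mem_cyclicCode β I₁ _).mp hmem b hbI1
    rwa [binWord_spec hn hodd β hβ hu _ (spec_conj hs hn hdvd b t)] at h0
  have hind := indep hs
    (fun m : ZMod s => if (2 : ZMod n) ^ m.val * b = b then (1 : GaloisField 2 s) else 0)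
    (fun t => by
      have hre : ∑ m : ZMod s,
          (if (2 : ZMod n) ^ m.val * b = b then (1 : GaloisField 2 s) else 0)
            * t ^ ((2:ℕ) ^ m.val) = spec b t b := by
        rw [spec]
        exact Finset.sum_congr rfl fun m _ => by rw [ite_mul, one_mul, zero_mul]
      rw [hre]
      exact hzero t)
  have h1 := hind 0
  simp [ZMod.val_zero] at h1

lemma forward_triple [NeZero n] [NeZero s] (hs : 1 < s) (hn : 1 < n) (hdvd : n ∣ 2 ^ s - 1)
    (β : GaloisField 2 s) (hβ : IsPrimitiveRoot β n)
    (I₁ I₂ : Set (ZMod n))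
    (hI₁ : (fun a => 2 * a) '' I₁ = I₁) (hI₂ : (fun a => 2 * a) '' I₂ = I₂)
    (h : IsCSST (cyclicCode β I₁) (cyclicCode β I₂)) :
    ¬ ∃ a ∈ I₁, ∃ b ∈ I₁, ∃ c ∈ I₂, a + b + c = (0 : ZMod n) := by
  classical
  have hodd := n_odd hs hn hdvd
  have hu := two_unit hs hn hdvd
  have hCd : cyclicCode β I₂ ≤ dualCode (schur (cyclicCode β I₁) (cyclicCode β I₁)) :=
    le_trans h inf_le_right
  rintro ⟨a, ha, b, hb, c, hc, habc⟩
  have hS : ∀ t u v : GaloisField 2 s,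
      ∑ m1 : ZMod s, ∑ m2 : ZMod s, ∑ m3 : ZMod s,
        (if (2:ZMod n) ^ m1.val * a + (2:ZMod n) ^ m2.val * b + (2:ZMod n) ^ m3.val * c = 0
          then t ^ ((2:ℕ) ^ m1.val) * u ^ ((2:ℕ) ^ m2.val) * v ^ ((2:ℕ) ^ m3.val)
          else 0) = 0 := by
    intro t u v
    set x := binWord β (spec a t) with hxdef
    set y := binWord β (spec b u) with hydef
    set z := binWord β (spec c v) with hzdef
    have hx : x ∈ cyclicCode β I₁ := spec_word_mem hs hn hdvd β hβ hI₁ ha t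
    have hy : y ∈ cyclicCode β I₁ := spec_word_mem hs hn hdvd β hβ hI₁ hb u
    have hz : z ∈ cyclicCode β I₂ := spec_word_mem hs hn hdvd β hβ hI₂ hc v
    have hxy : x * y ∈ schur (cyclicCode β I₁) (cyclicCode β I₁) :=
      Submodule.subset_span ⟨x, hx, y, hy, rfl⟩
    have hsum0 : ∑ i, z i * (x * y) i = 0 := (mem_dualCode.mp (hCd hz)) _ hxy
    have hsum0' : ∑ k, x k * y k * z k = 0 := by
      rw [← hsum0]
      refine Finset.sum_congr rfl fun i _ => ?_
      simp [Pi.mul_apply]; ring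
    rw [← spec_triple_sum a b c t u v]
    have hrw : ∀ p q : ZMod n,
        spec a t p * spec b u q * spec c v (-(p + q))
          = evalMap β p x * evalMap β q y * evalMap β (-(p + q)) z := by
      intro p q
      rw [hxdef, hydef, hzdef,
        binWord_spec hn hodd β hβ hu _ (spec_conj hs hn hdvd a t),
        binWord_spec hn hodd β hβ hu _ (spec_conj hs hn hdvd b u),
        binWord_spec hn hodd β hβ hu _ (spec_conj hs hn hdvd c v)]
    calc ∑ p : ZMod n, ∑ q : ZMod n, spec a t p * spec b u q * spec c v (-(p + q))
        = ∑ p : ZMod n, ∑ q : ZMod n,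
            evalMap β p x * evalMap β q y * evalMap β (-(p + q)) z :=
          Finset.sum_congr rfl fun p _ => Finset.sum_congr rfl fun q _ => hrw p q
      _ = algebraMap (ZMod 2) (GaloisField 2 s) (∑ k, x k * y k * z k) :=
          triple_formula hn hodd β hβ x y z
      _ = 0 := by rw [hsum0', map_zero]
  have hS1 : ∀ u v : GaloisField 2 s,
      ∑ m2 : ZMod s, ∑ m3 : ZMod s,
        (if a + (2:ZMod n) ^ m2.val * b + (2:ZMod n) ^ m3.val * c = 0
          then u ^ ((2:ℕ) ^ m2.val) * v ^ ((2:ℕ) ^ m3.val) else 0) = 0 := by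
    intro u v
    have hind := indep hs
      (fun m1 : ZMod s => ∑ m2 : ZMod s, ∑ m3 : ZMod s,
        (if (2:ZMod n) ^ m1.val * a + (2:ZMod n) ^ m2.val * b + (2:ZMod n) ^ m3.val * c = 0
          then u ^ ((2:ℕ) ^ m2.val) * v ^ ((2:ℕ) ^ m3.val) else 0))
      (fun t => by
        have hre : ∀ m1 : ZMod s, (∑ m2 : ZMod s, ∑ m3 : ZMod s,
            (if (2:ZMod n) ^ m1.val * a + (2:ZMod n) ^ m2.val * b + (2:ZMod n) ^ m3.val * c = 0
              then u ^ ((2:ℕ) ^ m2.val) * v ^ ((2:ℕ) ^ m3.val) else 0)) * t ^ ((2:ℕ) ^ m1.val)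
            = ∑ m2 : ZMod s, ∑ m3 : ZMod s,
              (if (2:ZMod n) ^ m1.val * a + (2:ZMod n) ^ m2.val * b
                  + (2:ZMod n) ^ m3.val * c = 0
                then t ^ ((2:ℕ) ^ m1.val) * u ^ ((2:ℕ) ^ m2.val) * v ^ ((2:ℕ) ^ m3.val)
                else 0) := by
          intro m1
          simp only [Finset.sum_mul, ite_mul, zero_mul]
          refine Finset.sum_congr rfl fun m2 _ => Finset.sum_congr rfl fun m3 _ => ?_
          split
          · ring
          · rfl
        rw [Finset.sum_congr rfl fun m1 _ => hre m1]
        exact hS t u v)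
    have h1 := hind 0
    simpa [ZMod.val_zero] using h1
  have hS2 : ∀ v : GaloisField 2 s,
      ∑ m3 : ZMod s,
        (if a + b + (2:ZMod n) ^ m3.val * c = 0 then v ^ ((2:ℕ) ^ m3.val) else 0) = 0 := by
    intro v
    have hind := indep hs
      (fun m2 : ZMod s => ∑ m3 : ZMod s,
        (if a + (2:ZMod n) ^ m2.val * b + (2:ZMod n) ^ m3.val * c = 0
          then v ^ ((2:ℕ) ^ m3.val) else 0))
      (fun u => by
        have hre : ∀ m2 : ZMod s, (∑ m3 : ZMod s,
            (if a + (2:ZMod n) ^ m2.val * b + (2:ZMod n) ^ m3.val * c = 0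
              then v ^ ((2:ℕ) ^ m3.val) else 0)) * u ^ ((2:ℕ) ^ m2.val)
            = ∑ m3 : ZMod s,
              (if a + (2:ZMod n) ^ m2.val * b + (2:ZMod n) ^ m3.val * c = 0
                then u ^ ((2:ℕ) ^ m2.val) * v ^ ((2:ℕ) ^ m3.val) else 0) := by
          intro m2
          simp only [Finset.sum_mul, ite_mul, zero_mul]
          refine Finset.sum_congr rfl fun m3 _ => ?_
          split
          · ring
          · rfl
        rw [Finset.sum_congr rfl fun m2 _ => hre m2]
        exact hS1 u v)
    have h1 := hind 0
    simpa [ZMod.val_zero] using h1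
  have hS3 := indep hs
    (fun m3 : ZMod s =>
      (if a + b + (2:ZMod n) ^ m3.val * c = 0 then (1 : GaloisField 2 s) else 0))
    (fun v => by
      have hre : ∑ m3 : ZMod s,
          (if a + b + (2:ZMod n) ^ m3.val * c = 0 then (1 : GaloisField 2 s) else 0)
            * v ^ ((2:ℕ) ^ m3.val)
          = ∑ m3 : ZMod s,
            (if a + b + (2:ZMod n) ^ m3.val * c = 0 then v ^ ((2:ℕ) ^ m3.val) else 0) :=
        Finset.sum_congr rfl fun m3 _ => by rw [ite_mul, one_mul, zero_mul]
      rw [hre]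
      exact hS2 v)
  have h1 := hS3 0
  simp [ZMod.val_zero, habc] at h1

end CSST

theorem stmt_19 (s n : ℕ) (hs : 1 < s) (hn : 1 < n) (hdvd : n ∣ 2 ^ s - 1)
    (β : GaloisField 2 s) (hβ : IsPrimitiveRoot β n)
    (I₁ I₂ : Set (ZMod n))
    (hI₁ : (fun a => 2 * a) '' I₁ = I₁) (hI₂ : (fun a => 2 * a) '' I₂ = I₂) :
    IsCSST (cyclicCode β I₁) (cyclicCode β I₂)
    ↔ (I₂ ⊆ I₁ ∧ ¬ ∃ a ∈ I₁, ∃ b ∈ I₁, ∃ c ∈ I₂, a + b + c = (0 : ZMod n)) := by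
  haveI : NeZero n := ⟨by omega⟩
  haveI : NeZero s := ⟨by omega⟩
  constructor
  · intro h
    exact ⟨CSST.forward_sub hs hn hdvd β hβ I₁ I₂ hI₂ h,
           CSST.forward_triple hs hn hdvd β hβ I₁ I₂ hI₁ hI₂ h⟩
  · rintro ⟨h1, h2⟩
    exact CSST.backward hs hn hdvd β hβ I₁ I₂ h1 h2
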